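/- Under the top-half approval rule with n voters, m alternatives, and a symmetric distribution D on [0,1], the winning alternative (the one ranked in the top ⌈m/2⌉ positions by the most voters, hence by at least n/2 voters) has expected social welfare at least (1/3) of the maximum expected social welfare over all alternatives. -/

import Mathlib

open MeasureTheory ProbabilityTheory

/-- The `j`-th smallest value (1-indexed) of a list of reals. -/
noncomputable def orderStat (l : List ℝ) (j : ℕ) : ℝ :=
  (l.insertionSort (· ≤ ·)).getD (j - 1) 0

section AuxLemmas
open Set

lemma sorted_getD_le_iff (s : List ℝ) (hs : s.Pairwise (· ≤ ·)) (t : ℝ) :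
    ∀ k, k < s.length → (s.getD k 0 ≤ t ↔ k + 1 ≤ s.countP (fun x => decide (x ≤ t))) := by
  induction s with
  | nil => intro k hk; simp at hk
  | cons a s ih =>
    intro k hk
    have hs' : s.Pairwise (· ≤ ·) := hs.of_cons
    rw [List.countP_cons]
    match k with
    | 0 =>
      simp only [List.getD_cons_zero]
      constructor
      · intro h; have : decide (a ≤ t) = true := by simpa using h
        simp [this]
      · intro h
        by_cases hat : a ≤ t
        · exact hat
        · exfalso
          rw [if_neg (by simp [hat] : ¬ (decide (a ≤ t) = true)), add_zero] at h
          obtain ⟨x, hx, hxt⟩ := List.countP_pos_iff.mp (by omega : 0 < s.countP (fun x => decide (x ≤ t)))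
          exact hat (le_trans ((List.pairwise_cons.mp hs).1 x hx) (by simpa using hxt))
    | k + 1 =>
      simp only [List.getD_cons_succ]
      have hk' : k < s.length := by simpa using hk
      rw [ih hs' k hk']
      by_cases hat : a ≤ t
      · simp [hat]
      · have h0 : s.countP (fun x => decide (x ≤ t)) = 0 := by
          rw [List.countP_eq_zero]
          intro x hx
          simpa using fun hxt => hat (le_trans ((List.pairwise_cons.mp hs).1 x hx) hxt)
        simp [hat, h0]

lemma countP_ofFn {m : ℕ} (x : Fin m → ℝ) (p : ℝ → Bool) :
    (List.ofFn x).countP p = (Finset.univ.filter fun i => p (x i)).card := by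
  induction m with
  | zero => simp
  | succ m ih =>
    rw [List.ofFn_succ, List.countP_cons, ih]
    rw [Finset.card_filter, Finset.card_filter, Fin.sum_univ_succ]
    by_cases h : p (x 0) <;> simp [h, add_comm]

lemma orderStat_le_iff {m : ℕ} (x : Fin m → ℝ) (k : ℕ) (hk1 : 1 ≤ k) (hk2 : k ≤ m) (t : ℝ) :
    orderStat (List.ofFn x) k ≤ t ↔ k ≤ (Finset.univ.filter fun i => x i ≤ t).card := by
  have hlen : ((List.ofFn x).insertionSort (· ≤ ·)).length = m := by
    rw [(List.perm_insertionSort _ _).length_eq, List.length_ofFn]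
  rw [orderStat, sorted_getD_le_iff _ (List.pairwise_insertionSort _ _) t (k-1) (by omega)]
  rw [(List.perm_insertionSort (· ≤ ·) (List.ofFn x)).countP_eq, countP_ofFn]
  have : (fun i => decide (x i ≤ t) = true) = (fun i => x i ≤ t) := by
    funext i; simp
  simp only [this]
  omega

lemma measurable_orderStat {m : ℕ} (k : ℕ) (hk1 : 1 ≤ k) (hk2 : k ≤ m) :
    Measurable (fun x : Fin m → ℝ => orderStat (List.ofFn x) k) := by
  apply measurable_of_Iic
  intro t
  have : (fun x : Fin m → ℝ => orderStat (List.ofFn x) k) ⁻¹' Set.Iic t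
      = {x : Fin m → ℝ | k ≤ (Finset.univ.filter fun i => x i ≤ t).card} := by
    ext x
    simp [orderStat_le_iff x k hk1 hk2 t]
  rw [this]
  have hmeas : Measurable (fun x : Fin m → ℝ => (Finset.univ.filter fun i => x i ≤ t).card) := by
    simp only [Finset.card_filter]
    apply Finset.measurable_sum
    intro i _
    exact Measurable.ite (measurableSet_le (measurable_pi_apply i) measurable_const)
      measurable_const measurable_const
  exact hmeas measurableSet_Ici

lemma orderStat_mem (l : List ℝ) (k : ℕ) (hk1 : 1 ≤ k) (hk2 : k ≤ l.length) :
    orderStat l k ∈ l := by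
  have hlen : (l.insertionSort (· ≤ ·)).length = l.length :=
    (List.perm_insertionSort _ _).length_eq
  rw [orderStat, List.getD_eq_getElem _ _ (by omega)]
  exact (List.perm_insertionSort (· ≤ ·) l).mem_iff.mp (List.getElem_mem _)

lemma orderStat_mono (l : List ℝ) (k k' : ℕ) (hk1 : 1 ≤ k) (hkk : k ≤ k') (hk2 : k' ≤ l.length) :
    orderStat l k ≤ orderStat l k' := by
  have hlen : (l.insertionSort (· ≤ ·)).length = l.length :=
    (List.perm_insertionSort _ _).length_eq
  rcases eq_or_lt_of_le hkk with h | h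
  · rw [h]
  rw [orderStat, orderStat, List.getD_eq_getElem _ _ (by omega),
    List.getD_eq_getElem _ _ (by omega)]
  exact List.Pairwise.rel_get_of_lt (List.pairwise_insertionSort _ _) (by simp; omega)

lemma orderStat_reflect (l : List ℝ) (k : ℕ) (hk1 : 1 ≤ k) (hk2 : k ≤ l.length) :
    orderStat (l.map (fun x => 1 - x)) k = 1 - orderStat l (l.length + 1 - k) := by
  set s := l.insertionSort (· ≤ ·) with hs
  have hlen : s.length = l.length := (List.perm_insertionSort _ _).length_eq
  have hsorted : s.Pairwise (· ≤ ·) := List.pairwise_insertionSort _ _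
  have key : (l.map (fun x => 1 - x)).insertionSort (· ≤ ·)
      = (s.map (fun x => 1 - x)).reverse := by
    have hperm : List.Perm ((l.map (fun x : ℝ => 1 - x)).insertionSort (· ≤ ·))
        ((s.map (fun x => 1 - x)).reverse) :=
      (List.perm_insertionSort _ _).trans
        (((List.perm_insertionSort (· ≤ ·) l).map _).symm.trans (List.reverse_perm _).symm)
    have hrev : ((s.map (fun x : ℝ => 1 - x)).reverse).Pairwise (· ≤ ·) := by
      rw [List.pairwise_reverse, List.pairwise_map]
      exact hsorted.imp (fun h => by linarith)
    exact hperm.eq_of_pairwise' (List.pairwise_insertionSort _ _) hrev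
  rw [orderStat, orderStat, key]
  have hlen2 : ((s.map (fun x => 1 - x)).reverse).length = l.length := by simp [hlen]
  rw [List.getD_eq_getElem _ _ (by omega), List.getD_eq_getElem _ _ (by simp only [← hs, hlen]; omega)]
  rw [List.getElem_reverse, List.getElem_map]
  congr 2
  simp [hlen]
  omega
lemma map_reflect (D : Measure ℝ) [IsProbabilityMeasure D]
    (hsupp : D (Set.Icc (0:ℝ) 1)ᶜ = 0)
    (hsym : ∀ ε ∈ Set.Icc (0:ℝ) (1/2), D {x | x ≤ 1/2 - ε} = D {x | 1/2 + ε ≤ x}) :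
    D.map (fun x => 1 - x) = D := by
  have hT : Measurable (fun x : ℝ => 1 - x) := measurable_const.sub measurable_id
  have hIio0 : D (Iio 0) = 0 :=
    measure_mono_null (fun x hx => by simp only [mem_compl_iff, mem_Icc]; intro h; exact absurd h.1 (not_le.mpr hx)) hsupp
  have hIoi1 : D (Ioi 1) = 0 :=
    measure_mono_null (fun x hx => by simp only [mem_compl_iff, mem_Icc]; intro h; exact absurd h.2 (not_le.mpr hx)) hsupp
  have hsym' : ∀ ε : ℝ, 0 ≤ ε → ε ≤ 1/2 → D (Iic (1/2 - ε)) = D (Ici (1/2 + ε)) := by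
    intro ε h1 h2
    have := hsym ε ⟨h1, h2⟩
    simpa [Set.Iic, Set.Ici] using this
  have hcont : ∀ s : ℝ, 0 < s → s ≤ 1/2 → D (Iio s) = D (Ioi (1 - s)) := by
    intro s hs0 hs2
    have hU1 : Iio s = ⋃ n : ℕ, Iic (s - s/(n+1)) := by
      ext x
      simp only [mem_Iio, mem_iUnion, mem_Iic]
      constructor
      · intro hx
        obtain ⟨n, hn⟩ := exists_nat_gt (s / (s - x))
        refine ⟨n, ?_⟩
        have hsx : 0 < s - x := by linarith
        have hn1 : s / (s - x) < n + 1 := by linarith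
        have : s / (n + 1) < s - x := by
          rw [div_lt_iff₀ (by positivity)]
          rw [div_lt_iff₀ hsx] at hn1
          linarith
        linarith
      · rintro ⟨n, hn⟩
        have : 0 < s / (n + 1) := by positivity
        linarith
    have hU2 : Ioi (1 - s) = ⋃ n : ℕ, Ici (1 - s + s/(n+1)) := by
      ext x
      simp only [mem_Ioi, mem_iUnion, mem_Ici]
      constructor
      · intro hx
        obtain ⟨n, hn⟩ := exists_nat_gt (s / (x - (1 - s)))
        refine ⟨n, ?_⟩
        have hsx : 0 < x - (1 - s) := by linarith
        have hn1 : s / (x - (1 - s)) < n + 1 := by linarith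
        have : s / (n + 1) < x - (1 - s) := by
          rw [div_lt_iff₀ (by positivity)]
          rw [div_lt_iff₀ hsx] at hn1
          linarith
        linarith
      · rintro ⟨n, hn⟩
        have : 0 < s / (n + 1) := by positivity
        linarith
    rw [hU1, hU2]
    rw [Directed.measure_iUnion, Directed.measure_iUnion]
    · apply iSup_congr
      intro n
      have h1 : (0:ℝ) ≤ 1/2 - s + s/(n+1) := by
        have : 0 < s / (n + 1) := by positivity
        linarith
      have h2 : 1/2 - s + s/(n+1) ≤ 1/2 := by
        have : s / (n+1) ≤ s := by
          rw [div_le_iff₀ (by positivity)]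
          nlinarith
        linarith
      have := hsym' (1/2 - s + s/(n+1)) h1 h2
      have e1 : 1/2 - (1/2 - s + s/(n+1)) = s - s/(n+1) := by ring
      have e2 : 1/2 + (1/2 - s + s/(n+1)) = 1 - s + s/(n+1) := by ring
      rw [e1, e2] at this
      exact this
    · apply Monotone.directed_le
      intro a b hab
      apply Ici_subset_Ici.mpr
      have : s / (b+1) ≤ s / (a+1) := by
        apply div_le_div_of_nonneg_left (le_of_lt hs0) (by positivity)
        exact_mod_cast by omega
      linarith
    · apply Monotone.directed_le
      intro a b hab
      apply Iic_subset_Iic.mpr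
      have : s / (b+1) ≤ s / (a+1) := by
        apply div_le_div_of_nonneg_left (le_of_lt hs0) (by positivity)
        exact_mod_cast by omega
      linarith
  apply Measure.ext_of_Iic
  intro t
  rw [Measure.map_apply hT measurableSet_Iic]
  have hpre : (fun x : ℝ => 1 - x) ⁻¹' Iic t = Ici (1 - t) := by
    ext x; simp only [mem_preimage, mem_Iic, mem_Ici]; constructor <;> intro <;> linarith
  rw [hpre]
  rcases lt_or_ge t 0 with ht | ht
  · rw [measure_mono_null (fun x hx => show x ∈ Ioi (1:ℝ) from by simp only [mem_Ici] at hx; simp only [mem_Ioi]; linarith) hIoi1,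
      measure_mono_null (fun x hx => show x ∈ Iio (0:ℝ) from by simp only [mem_Iic] at hx; simp only [mem_Iio]; linarith) hIio0]
  rcases le_or_gt t (1/2) with ht2 | ht2
  · have := hsym' (1/2 - t) (by linarith) (by linarith)
    have e1 : 1/2 - (1/2 - t) = t := by ring
    have e2 : 1/2 + (1/2 - t) = 1 - t := by ring
    rw [e1, e2] at this
    exact this.symm
  rcases lt_or_ge t 1 with ht1 | ht1
  · have hs := hcont (1 - t) (by linarith) (by linarith)
    have e : 1 - (1 - t) = t := by ring
    rw [e] at hs
    have c1 : D (Ici (1 - t)) = 1 - D (Iio (1 - t)) := by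
      rw [← prob_compl_eq_one_sub measurableSet_Iio, compl_Iio]
    have c2 : D (Iic t) = 1 - D (Ioi t) := by
      rw [← prob_compl_eq_one_sub measurableSet_Ioi, compl_Ioi]
    rw [c1, c2, hs]
  · have h1 : D (Ici (1 - t)) = 1 := by
      rw [← prob_compl_eq_zero_iff measurableSet_Ici, compl_Ici]
      exact measure_mono_null (fun x hx => show x ∈ Iio (0:ℝ) from by
        simp only [mem_Iio] at hx ⊢; linarith) hIio0
    have h2 : D (Iic t) = 1 := by
      rw [← prob_compl_eq_zero_iff measurableSet_Iic, compl_Iic]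
      exact measure_mono_null (fun x hx => show x ∈ Ioi (1:ℝ) from by
        simp only [mem_Ioi] at hx ⊢; linarith) hIoi1
    rw [h1, h2]
lemma map_pi {Ω : Type*} [MeasurableSpace Ω] (μ : Measure Ω) [IsProbabilityMeasure μ] {m : ℕ}
    (X : Fin m → Ω → ℝ) (hX : ∀ l, Measurable (X l))
    (hind : iIndepFun X μ) (D : Measure ℝ) [IsProbabilityMeasure D]
    (hlaw : ∀ l, μ.map (X l) = D) :
    μ.map (fun ω l => X l ω) = Measure.pi (fun _ => D) := by
  refine (Measure.pi_eq fun s hs => ?_).symm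
  have hvec : Measurable (fun ω l => X l ω) := measurable_pi_lambda _ hX
  rw [Measure.map_apply hvec (MeasurableSet.univ_pi hs)]
  have hpre : (fun ω l => X l ω) ⁻¹' (Set.pi Set.univ s) = ⋂ l, X l ⁻¹' s l := by
    ext ω; simp [Set.mem_pi]
  rw [hpre]
  have key := hind.measure_inter_preimage_eq_mul Finset.univ (sets := s) (fun l _ => hs l)
  have e1 : (⋂ l ∈ (Finset.univ : Finset (Fin m)), X l ⁻¹' s l) = ⋂ l, X l ⁻¹' s l := by
    simp
  rw [e1] at key
  rw [key]
  apply Finset.prod_congr rfl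
  intro l _
  rw [← hlaw l, Measure.map_apply (hX l) (hs l)]

lemma sub_indep {Ω : Type*} [MeasurableSpace Ω] (μ : Measure Ω) {n m : ℕ}
    (V : Fin n → Fin m → Ω → ℝ)
    (hindep : iIndepFun (fun p : Fin n × Fin m => V p.1 p.2) μ)
    (i : Fin n) :
    iIndepFun (fun l => V i l) μ := by
  rw [iIndepFun_iff_measure_inter_preimage_eq_mul]
  intro S sets hsets
  classical
  have hinj : Function.Injective (fun l : Fin m => ((i, l) : Fin n × Fin m)) :=
    fun a b h => (Prod.ext_iff.mp h).2
  have := hindep.measure_inter_preimage_eq_mul (S.image (fun l => (i, l)))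
    (sets := fun p => sets p.2) (fun p hp => by
      obtain ⟨l, hl, rfl⟩ := Finset.mem_image.mp hp
      exact hsets l hl)
  rw [Finset.prod_image (fun a _ b _ h => hinj h)] at this
  have hset : (⋂ p ∈ S.image (fun l => ((i, l) : Fin n × Fin m)), V p.1 p.2 ⁻¹' sets p.2)
      = ⋂ l ∈ S, V i l ⁻¹' sets l := by
    ext ω
    simp only [Set.mem_iInter, Finset.mem_image]
    constructor
    · intro h l hl
      exact h (i, l) ⟨l, hl, rfl⟩
    · rintro h p ⟨l, hl, rfl⟩
      exact h l hl
  rw [hset] at this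
  exact this
noncomputable def eD (D : Measure ℝ) (m k : ℕ) : ℝ :=
  ∫ x : Fin m → ℝ, orderStat (List.ofFn x) k ∂(Measure.pi fun _ => D)

section
variable {m : ℕ} (D : Measure ℝ) [IsProbabilityMeasure D]

lemma ae_mem_Icc (hsupp : D (Set.Icc (0:ℝ) 1)ᶜ = 0) :
    ∀ᵐ x : Fin m → ℝ ∂(Measure.pi fun _ => D), ∀ l, x l ∈ Set.Icc (0:ℝ) 1 := by
  rw [ae_all_iff]
  intro l
  have : {x : Fin m → ℝ | ¬ x l ∈ Set.Icc (0:ℝ) 1} = Function.eval l ⁻¹' (Set.Icc (0:ℝ) 1)ᶜ := rfl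
  rw [ae_iff, this]
  exact Measure.pi_eval_preimage_null _ hsupp

lemma ae_orderStat_mem (hsupp : D (Set.Icc (0:ℝ) 1)ᶜ = 0) (k : ℕ) (hk1 : 1 ≤ k) (hk2 : k ≤ m) :
    ∀ᵐ x : Fin m → ℝ ∂(Measure.pi fun _ => D),
      orderStat (List.ofFn x) k ∈ Set.Icc (0:ℝ) 1 := by
  filter_upwards [ae_mem_Icc D hsupp] with x hx
  have hmem := orderStat_mem (List.ofFn x) k hk1 (by simpa using hk2)
  obtain ⟨l, hl⟩ := Set.mem_range.mp ((List.mem_ofFn' _ _).mp hmem)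
  rw [← hl]
  exact hx l

lemma integrable_orderStat (hsupp : D (Set.Icc (0:ℝ) 1)ᶜ = 0) (k : ℕ) (hk1 : 1 ≤ k) (hk2 : k ≤ m) :
    Integrable (fun x : Fin m → ℝ => orderStat (List.ofFn x) k)
      (Measure.pi fun _ => D) := by
  refine Integrable.mono' (integrable_const 1)
    (measurable_orderStat k hk1 hk2).aestronglyMeasurable ?_
  filter_upwards [ae_orderStat_mem D hsupp k hk1 hk2] with x hx
  rw [Real.norm_eq_abs, abs_le]
  exact ⟨by linarith [hx.1], hx.2⟩

lemma eD_nonneg (hsupp : D (Set.Icc (0:ℝ) 1)ᶜ = 0) (k : ℕ) (hk1 : 1 ≤ k) (hk2 : k ≤ m) : 0 ≤ eD D m k :=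
  integral_nonneg_of_ae <| by
    filter_upwards [ae_orderStat_mem D hsupp k hk1 hk2] with x hx using hx.1

lemma eD_le_one (hsupp : D (Set.Icc (0:ℝ) 1)ᶜ = 0) (k : ℕ) (hk1 : 1 ≤ k) (hk2 : k ≤ m) : eD D m k ≤ 1 := by
  have : eD D m k ≤ ∫ _x : Fin m → ℝ, (1:ℝ) ∂(Measure.pi fun _ => D) := by
    refine integral_mono_ae (integrable_orderStat D hsupp k hk1 hk2) (integrable_const 1) ?_
    filter_upwards [ae_orderStat_mem D hsupp k hk1 hk2] with x hx using hx.2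
  simpa using this

lemma eD_mono (hsupp : D (Set.Icc (0:ℝ) 1)ᶜ = 0) (k k' : ℕ) (hk1 : 1 ≤ k) (hkk : k ≤ k') (hk2 : k' ≤ m) :
    eD D m k ≤ eD D m k' := by
  refine integral_mono (integrable_orderStat D hsupp k hk1 (le_trans hkk hk2))
    (integrable_orderStat D hsupp k' (le_trans hk1 hkk) hk2) ?_
  intro x
  exact orderStat_mono (List.ofFn x) k k' hk1 hkk (by simpa using hk2)

lemma eD_add (hsupp : D (Set.Icc (0:ℝ) 1)ᶜ = 0) (hsym : ∀ ε ∈ Set.Icc (0:ℝ) (1/2), D {x | x ≤ 1/2 - ε} = D {x | 1/2 + ε ≤ x})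
    (k : ℕ) (hk1 : 1 ≤ k) (hk2 : k ≤ m) :
    eD D m k + eD D m (m + 1 - k) = 1 := by
  have hT : Measurable (fun x : ℝ => 1 - x) := measurable_const.sub measurable_id
  have hmp : MeasurePreserving (fun (x : Fin m → ℝ) (l : Fin m) => 1 - x l)
      (Measure.pi fun _ => D) (Measure.pi fun _ => D) :=
    measurePreserving_pi _ _ (fun _ => ⟨hT, map_reflect D hsupp hsym⟩)
  have h1 := integral_map (φ := fun (x : Fin m → ℝ) (l : Fin m) => 1 - x l)
    (μ := Measure.pi fun _ : Fin m => D) hmp.measurable.aemeasurable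
    (f := fun y : Fin m → ℝ => orderStat (List.ofFn y) k)
    (by rw [hmp.map_eq]; exact (measurable_orderStat k hk1 hk2).aestronglyMeasurable)
  rw [hmp.map_eq, ← eD] at h1
  have h2 : ∀ x : Fin m → ℝ, orderStat (List.ofFn fun l => 1 - x l) k
      = 1 - orderStat (List.ofFn x) (m + 1 - k) := by
    intro x
    have : (List.ofFn fun l => 1 - x l) = (List.ofFn x).map (fun v => 1 - v) := by
      rw [List.map_ofFn]; rfl
    rw [this, orderStat_reflect _ k hk1 (by simpa using hk2), List.length_ofFn]
  simp_rw [h2] at h1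
  rw [integral_sub (integrable_const 1)
    (integrable_orderStat D hsupp (m+1-k) (by omega) (by omega))] at h1
  simp only [integral_const, measure_univ, probReal_univ, ENNReal.toReal_one, smul_eq_mul, one_mul] at h1
  rw [← eD] at h1
  linarith [h1]
end

end AuxLemmas

/-- Top-half approval: with utilities i.i.d. from a symmetric distribution on `[0,1]`,
the alternative `w` ranked among the top `⌈m/2⌉` positions by the most voters has
expected social welfare at least a third of that of any alternative.
`rank i j = 0` means voter `i` ranks alternative `j` first (so `j` receives voter
`i`'s largest draw). -/
theorem stmt13 {Ω : Type*} [MeasurableSpace Ω] (μ : Measure Ω) [IsProbabilityMeasure μ]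
    (n m : ℕ) (hn : 0 < n) (hm : 0 < m)
    (V : Fin n → Fin m → Ω → ℝ) (hmeas : ∀ i l, Measurable (V i l))
    (hindep : iIndepFun (fun p : Fin n × Fin m => V p.1 p.2) μ)
    (D : Measure ℝ) [IsProbabilityMeasure D] (hlaw : ∀ i l, μ.map (V i l) = D)
    (hsupp : D (Set.Icc (0 : ℝ) 1)ᶜ = 0)
    (hsym : ∀ ε ∈ Set.Icc (0 : ℝ) (1 / 2),
      D {x | x ≤ 1 / 2 - ε} = D {x | 1 / 2 + ε ≤ x})
    (rank : Fin n → Equiv.Perm (Fin m))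
    (SW : Fin m → Ω → ℝ)
    (hSW : ∀ j ω, SW j ω =
      ∑ i, orderStat (List.ofFn fun l => V i l ω) (m - (rank i j : ℕ)))
    (w : Fin m)
    (hw : ∀ j, (Finset.univ.filter fun i => ((rank i) j : ℕ) < (m + 1) / 2).card ≤
      (Finset.univ.filter fun i => ((rank i) w : ℕ) < (m + 1) / 2).card) :
    ∀ j, ∫ ω, SW j ω ∂μ ≤ 3 * ∫ ω, SW w ω ∂μ := by
  classical
  intro j
  have hvec : ∀ i : Fin n, Measurable (fun ω l => V i l ω) :=
    fun i => measurable_pi_lambda _ (hmeas i)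
  have hmap : ∀ i : Fin n, μ.map (fun ω l => V i l ω) = Measure.pi (fun _ : Fin m => D) :=
    fun i => map_pi μ (V i) (hmeas i) (sub_indep μ V hindep i) D (hlaw i)
  have hint_eq : ∀ (i : Fin n) (k : ℕ), 1 ≤ k → k ≤ m →
      ∫ ω, orderStat (List.ofFn fun l => V i l ω) k ∂μ = eD D m k := by
    intro i k hk1 hk2
    have h := integral_map (φ := fun ω l => V i l ω) (hvec i).aemeasurable
      (f := fun y : Fin m → ℝ => orderStat (List.ofFn y) k)
      (by rw [hmap i]; exact (measurable_orderStat k hk1 hk2).aestronglyMeasurable)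
    rw [hmap i] at h
    exact h.symm
  have hint : ∀ (i : Fin n) (k : ℕ), 1 ≤ k → k ≤ m →
      Integrable (fun ω => orderStat (List.ofFn fun l => V i l ω) k) μ := by
    intro i k hk1 hk2
    have h1 : Integrable (fun y : Fin m → ℝ => orderStat (List.ofFn y) k)
        (μ.map (fun ω l => V i l ω)) := by
      rw [hmap i]; exact integrable_orderStat D hsupp k hk1 hk2
    exact (integrable_map_measure
      (by rw [hmap i]; exact (measurable_orderStat k hk1 hk2).aestronglyMeasurable)
      (hvec i).aemeasurable).mp h1
  have hSWint : ∀ j' : Fin m, ∫ ω, SW j' ω ∂μ = ∑ i : Fin n, eD D m (m - (rank i j' : ℕ)) := by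
    intro j'
    have hk : ∀ i : Fin n, 1 ≤ m - (rank i j' : ℕ) ∧ m - (rank i j' : ℕ) ≤ m := by
      intro i; have := (rank i j').isLt; omega
    calc ∫ ω, SW j' ω ∂μ
        = ∫ ω, ∑ i, orderStat (List.ofFn fun l => V i l ω) (m - (rank i j' : ℕ)) ∂μ := by
          simp_rw [hSW j']
      _ = ∑ i, ∫ ω, orderStat (List.ofFn fun l => V i l ω) (m - (rank i j' : ℕ)) ∂μ :=
          integral_finset_sum _ (fun i _ => hint i _ (hk i).1 (hk i).2)
      _ = ∑ i, eD D m (m - (rank i j' : ℕ)) :=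
          Finset.sum_congr rfl (fun i _ => hint_eq i _ (hk i).1 (hk i).2)
  have htop : ∀ k : ℕ, 1 ≤ k → k ≤ m → m + 1 ≤ 2 * k → 1/2 ≤ eD D m k := by
    intro k hk1 hk2 hk3
    have hmono := eD_mono D hsupp (m + 1 - k) k (by omega) (by omega) hk2
    have hadd := eD_add D hsupp hsym k hk1 hk2
    linarith
  have hbot : ∀ k : ℕ, 1 ≤ k → 2 * k ≤ m → eD D m k ≤ 1/2 := by
    intro k hk1 hk3
    have hmono := eD_mono (m := m) D hsupp k (m + 1 - k) hk1 (by omega) (by omega)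
    have hadd := eD_add (m := m) D hsupp hsym k hk1 (by omega)
    linarith
  let z : Fin m → ℕ := fun j' => (Finset.univ.filter fun i => ((rank i) j' : ℕ) < (m + 1) / 2).card
  have hzeq : ∀ j', z j' = (Finset.univ.filter fun i => ((rank i) j' : ℕ) < (m + 1) / 2).card :=
    fun _ => rfl
  -- upper bound for alternative j
  have hub : ∫ ω, SW j ω ∂μ ≤ (z j : ℝ) * 1 + ((n : ℝ) - z j) * (1/2) := by
    rw [hSWint j]
    have hle : ∀ i : Fin n, eD D m (m - (rank i j : ℕ))
        ≤ if ((rank i) j : ℕ) < (m + 1) / 2 then (1:ℝ) else 1/2 := by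
      intro i
      have hlt := (rank i j).isLt
      by_cases hc : ((rank i) j : ℕ) < (m + 1) / 2
      · rw [if_pos hc]; exact eD_le_one D hsupp _ (by omega) (by omega)
      · rw [if_neg hc]; exact hbot _ (by omega) (by omega)
    have hcards : (Finset.univ.filter fun i => ((rank i) j : ℕ) < (m + 1) / 2).card
        + (Finset.univ.filter fun i => ¬ (((rank i) j : ℕ) < (m + 1) / 2)).card = n := by
      rw [Finset.card_filter_add_card_filter_not]
      simp
    calc ∑ i, eD D m (m - (rank i j : ℕ))
        ≤ ∑ i : Fin n, (if ((rank i) j : ℕ) < (m + 1) / 2 then (1:ℝ) else 1/2) :=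
          Finset.sum_le_sum (fun i _ => hle i)
      _ = (z j : ℝ) * 1 + ((n : ℝ) - z j) * (1/2) := by
          rw [Finset.sum_ite, Finset.sum_const, Finset.sum_const, nsmul_eq_mul, nsmul_eq_mul]
          have h1 : ((Finset.univ.filter fun i => ((rank i) j : ℕ) < (m + 1) / 2).card : ℝ)
              = (z j : ℝ) := by rw [hzeq j]
          have h2 : ((Finset.univ.filter fun i => ¬ (((rank i) j : ℕ) < (m + 1) / 2)).card : ℝ)
              = (n : ℝ) - (z j : ℝ) := by
            rw [hzeq j]
            push_cast [← hcards]
            ring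
          rw [h1, h2]
  -- lower bound for alternative w
  have hlb : (z w : ℝ) * (1/2) ≤ ∫ ω, SW w ω ∂μ := by
    rw [hSWint w]
    have hge : ∀ i : Fin n, (if ((rank i) w : ℕ) < (m + 1) / 2 then (1:ℝ)/2 else 0)
        ≤ eD D m (m - (rank i w : ℕ)) := by
      intro i
      have hlt := (rank i w).isLt
      by_cases hc : ((rank i) w : ℕ) < (m + 1) / 2
      · rw [if_pos hc]
        have := htop (m - (rank i w : ℕ)) (by omega) (by omega) (by omega)
        linarith
      · rw [if_neg hc]; exact eD_nonneg D hsupp _ (by omega) (by omega)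
    calc (z w : ℝ) * (1/2)
        = ∑ i : Fin n, (if ((rank i) w : ℕ) < (m + 1) / 2 then (1:ℝ)/2 else 0) := by
          rw [Finset.sum_ite, Finset.sum_const, Finset.sum_const_zero, add_zero,
            nsmul_eq_mul, hzeq w]
      _ ≤ ∑ i, eD D m (m - (rank i w : ℕ)) := Finset.sum_le_sum (fun i _ => hge i)
  -- z w is at least n / 2
  have hzw : (n : ℝ) ≤ 2 * (z w : ℝ) := by
    have hrow : ∀ i : Fin n,
        (Finset.univ.filter fun j' : Fin m => ((rank i) j' : ℕ) < (m + 1) / 2).card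
        = (m + 1) / 2 := by
      intro i
      have hcard : (Finset.univ.filter fun j' : Fin m => ((rank i) j' : ℕ) < (m + 1) / 2).card
          = (Finset.range ((m + 1) / 2)).card := by
        apply Finset.card_bij (fun a _ => ((rank i) a : ℕ))
        · intro a ha
          simp only [Finset.mem_filter] at ha
          simp [ha.2]
        · intro a ha b hb hab
          apply (rank i).injective
          exact Fin.val_injective hab
        · intro b hb
          simp only [Finset.mem_range] at hb
          have hbm : b < m := by omega
          refine ⟨(rank i).symm ⟨b, hbm⟩, ?_, ?_⟩
          · simp only [Finset.mem_filter, Finset.mem_univ, true_and]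
            rw [Equiv.apply_symm_apply]
            exact hb
          · rw [Equiv.apply_symm_apply]
      rw [hcard, Finset.card_range]
    have hsum : ∑ j' : Fin m, z j' = n * ((m + 1) / 2) := by
      have hswap : ∑ j' : Fin m, z j'
          = ∑ i : Fin n, (Finset.univ.filter fun j' : Fin m => ((rank i) j' : ℕ) < (m + 1) / 2).card := by
        simp_rw [hzeq, Finset.card_filter]
        rw [Finset.sum_comm]
      rw [hswap]
      rw [Finset.sum_congr rfl (fun i _ => hrow i), Finset.sum_const, Finset.card_univ,
        Fintype.card_fin, smul_eq_mul]
    have hsum_le : n * ((m + 1) / 2) ≤ m * z w := by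
      rw [← hsum]
      calc ∑ j' : Fin m, z j' ≤ ∑ _j' : Fin m, z w := Finset.sum_le_sum (fun j' _ => hw j')
        _ = m * z w := by rw [Finset.sum_const, Finset.card_univ, Fintype.card_fin, smul_eq_mul]
    have hnat : n ≤ 2 * z w := by
      have h1 : m * n ≤ m * (2 * z w) := by
        calc m * n ≤ n * (2 * ((m + 1) / 2)) := by
              have : m ≤ 2 * ((m + 1) / 2) := by omega
              calc m * n = n * m := Nat.mul_comm _ _
                _ ≤ n * (2 * ((m + 1) / 2)) := Nat.mul_le_mul_left n this
          _ = 2 * (n * ((m + 1) / 2)) := by ring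
          _ ≤ 2 * (m * z w) := Nat.mul_le_mul_left 2 hsum_le
          _ = m * (2 * z w) := by ring
      exact Nat.le_of_mul_le_mul_left h1 hm
    exact_mod_cast hnat
  have hzj : (z j : ℝ) ≤ (z w : ℝ) := by exact_mod_cast hw j
  linarith
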